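/- Local complementation preserves connectivity: a simple graph G is connected if and only if G * u is connected, for any vertex u. -/

import Mathlib

/-- Local complementation of a simple graph `G` at a vertex `u`: toggles all
edges between pairs of distinct neighbors of `u`, leaving all other edges unchanged. -/
def localComp {V : Type*} (G : SimpleGraph V) (u : V) : SimpleGraph V where
  Adj v w := v ≠ w ∧ Xor' (G.Adj v w) (G.Adj u v ∧ G.Adj u w)
  symm := by
    constructor
    rintro v w ⟨h1, h2⟩
    refine ⟨h1.symm, ?_⟩
    rwa [G.adj_comm w v, and_comm]
  loopless := by constructor; rintro v ⟨h, _⟩; exact h rfl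

lemma localComp_adj_u {V : Type*} (G : SimpleGraph V) (u v : V) :
    (localComp G u).Adj u v ↔ G.Adj u v := by
  constructor
  · rintro ⟨h1, h2⟩
    rcases h2 with ⟨h, _⟩ | ⟨⟨_, h⟩, _⟩
    exacts [h, h]
  · intro h
    exact ⟨G.ne_of_adj h, Or.inl ⟨h, fun hc => G.irrefl hc.1⟩⟩

lemma localComp_localComp {V : Type*} (G : SimpleGraph V) (u : V) :
    localComp (localComp G u) u = G := by
  ext v w
  constructor
  · rintro ⟨hne, hx⟩
    rw [localComp_adj_u, localComp_adj_u] at hx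
    have h2 : Xor' (v ≠ w ∧ Xor' (G.Adj v w) (G.Adj u v ∧ G.Adj u w))
        (G.Adj u v ∧ G.Adj u w) := hx
    unfold Xor' at h2
    unfold Xor at h2
    tauto
  · intro h
    refine ⟨G.ne_of_adj h, ?_⟩
    rw [localComp_adj_u, localComp_adj_u]
    show Xor' (v ≠ w ∧ Xor' (G.Adj v w) (G.Adj u v ∧ G.Adj u w)) (G.Adj u v ∧ G.Adj u w)
    have hne := G.ne_of_adj h
    unfold Xor'
    unfold Xor
    tauto

lemma localComp_connected {V : Type*} (G : SimpleGraph V) (u : V)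
    (h : G.Connected) : (localComp G u).Connected := by
  rw [SimpleGraph.connected_iff] at h ⊢
  refine ⟨?_, h.2⟩
  have key : ∀ a b, G.Adj a b → (localComp G u).Reachable a b := by
    intro a b hab
    by_cases hc : G.Adj u a ∧ G.Adj u b
    · exact (SimpleGraph.Adj.reachable ((localComp_adj_u G u a).2 hc.1).symm).trans
        (SimpleGraph.Adj.reachable ((localComp_adj_u G u b).2 hc.2))
    · exact SimpleGraph.Adj.reachable ⟨hab.ne, Or.inl ⟨hab, hc⟩⟩
  intro v w
  obtain ⟨p⟩ := h.1 v w
  induction p with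
  | nil => exact SimpleGraph.Reachable.refl _
  | cons hadj _ ih => exact (key _ _ hadj).trans ih

/-- Local complementation preserves connectivity: `G` is connected iff `G * u` is connected. -/
theorem localComp_connected_iff {V : Type*} (G : SimpleGraph V) (u : V) :
    G.Connected ↔ (localComp G u).Connected := by
  constructor
  · exact localComp_connected G u
  · intro h
    have := localComp_connected (localComp G u) u h
    rwa [localComp_localComp] at this
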